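/- Let β' ≥ β > 1 and I(r) = ∫_0^∞ dx / ((1+(rx)^β)(1+x^{β'})). Then for every r ≥ 0, I(r) ≥ (1/4)·min(1, 1/r). -/

import Mathlib

open Real Set MeasureTheory

lemma aux_meas (β β' r : ℝ) :
    Measurable (fun x : ℝ => 1 / ((1 + (r * x) ^ β) * (1 + x ^ β'))) := by
  apply Measurable.div measurable_const
  exact ((measurable_const.add ((measurable_const.mul measurable_id).pow_const β)).mul
    (measurable_const.add (measurable_id.pow_const β')))

lemma aux_denom_pos {β β' r x : ℝ} (hr : 0 ≤ r) (hx : 0 ≤ x) :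
    0 < (1 + (r * x) ^ β) * (1 + x ^ β') := by
  have h1 : (0:ℝ) ≤ (r * x) ^ β := rpow_nonneg (mul_nonneg hr hx) β
  have h2 : (0:ℝ) ≤ x ^ β' := rpow_nonneg hx β'
  positivity

lemma aux_integrable (β β' : ℝ) (hβ : 1 < β) (hββ' : β ≤ β') (r : ℝ) (hr : 0 ≤ r) :
    IntegrableOn (fun x : ℝ => 1 / ((1 + (r * x) ^ β) * (1 + x ^ β'))) (Ioi 0) := by
  have hβ' : 1 < β' := hβ.trans_le hββ'
  have hmeas := aux_meas β β' r
  have h1 : IntegrableOn (fun x : ℝ => 1 / ((1 + (r * x) ^ β) * (1 + x ^ β'))) (Ioc 0 1) := by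
    apply Integrable.mono' (integrable_const 1) hmeas.aestronglyMeasurable.restrict
    filter_upwards [ae_restrict_mem measurableSet_Ioc] with x hx
    have hd := aux_denom_pos (β := β) (β' := β') hr hx.1.le
    rw [Real.norm_eq_abs, abs_of_nonneg (by positivity)]
    rw [div_le_one hd]
    nlinarith [rpow_nonneg (mul_nonneg hr hx.1.le) β, rpow_nonneg hx.1.le β']
  have h2 : IntegrableOn (fun x : ℝ => 1 / ((1 + (r * x) ^ β) * (1 + x ^ β'))) (Ioi 1) := by
    apply Integrable.mono' (integrableOn_Ioi_rpow_of_lt (a := -β') (by linarith) zero_lt_one)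
      hmeas.aestronglyMeasurable.restrict
    filter_upwards [ae_restrict_mem measurableSet_Ioi] with x hx
    have hx0 : (0:ℝ) < x := lt_trans zero_lt_one hx
    have hd := aux_denom_pos (β := β) (β' := β') hr hx0.le
    rw [Real.norm_eq_abs, abs_of_nonneg (by positivity)]
    rw [div_le_iff₀ hd, rpow_neg hx0.le]
    have hx' : 0 < x ^ β' := rpow_pos_of_pos hx0 β'
    rw [inv_mul_eq_div, le_div_iff₀ hx']
    nlinarith [rpow_nonneg (mul_nonneg hr hx0.le) β, rpow_nonneg hx0.le β',
      mul_nonneg (rpow_nonneg (mul_nonneg hr hx0.le) β) (rpow_nonneg hx0.le β')]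
  have : Ioi (0:ℝ) = Ioc 0 1 ∪ Ioi 1 := (Ioc_union_Ioi_eq_Ioi zero_le_one).symm
  rw [this]
  exact h1.union h2

/-- for `β' ≥ β > 1` and all `r ≥ 0`,
`I(r) = ∫_0^∞ dx/((1+(rx)^β)(1+x^{β'})) ≥ (1/4) min(1, 1/r)`
(for `r = 0`, `min(1,1/r)` is interpreted as `1`). -/
theorem integral_lower_bound
    (β β' : ℝ) (hβ : 1 < β) (hββ' : β ≤ β') (r : ℝ) (hr : 0 ≤ r) :
    (1 / 4) * (if r = 0 then 1 else min 1 (1 / r))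
      ≤ ∫ x in Ioi (0 : ℝ), 1 / ((1 + (r * x) ^ β) * (1 + x ^ β')) := by
  set f : ℝ → ℝ := fun x => 1 / ((1 + (r * x) ^ β) * (1 + x ^ β')) with hf
  set m : ℝ := if r = 0 then 1 else min 1 (1 / r) with hm
  have hm0 : 0 < m := by
    rw [hm]; split_ifs with h
    · norm_num
    · have hr0 : 0 < r := lt_of_le_of_ne hr (Ne.symm h)
      exact lt_min one_pos (by positivity)
  have hm1 : m ≤ 1 := by
    rw [hm]; split_ifs with h
    · exact le_rfl
    · exact min_le_left _ _
  have hrm : r * m ≤ 1 := by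
    rw [hm]; split_ifs with h
    · simp [h]
    · have hr0 : 0 < r := lt_of_le_of_ne hr (Ne.symm h)
      calc r * min 1 (1/r) ≤ r * (1/r) := by
            exact mul_le_mul_of_nonneg_left (min_le_right _ _) hr
        _ = 1 := by field_simp
  have hint := aux_integrable β β' hβ hββ' r hr
  have step1 : (1/4 : ℝ) * m ≤ ∫ x in Ioc (0:ℝ) m, f x := by
    have : ∫ x in Ioc (0:ℝ) m, (1/4 : ℝ) ≤ ∫ x in Ioc (0:ℝ) m, f x := by
      apply setIntegral_mono_on (integrable_const _)
        (hint.mono_set (Ioc_subset_Ioi_self)) measurableSet_Ioc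
      intro x hx
      have hx0 := hx.1
      have hd := aux_denom_pos (β := β) (β' := β') hr hx0.le
      have hrx : r * x ≤ 1 := le_trans (mul_le_mul_of_nonneg_left hx.2 hr) hrm
      have hx1 : x ≤ 1 := le_trans hx.2 hm1
      have h1 : (r * x) ^ β ≤ 1 := rpow_le_one (mul_nonneg hr hx0.le) hrx (by linarith)
      have h2 : x ^ β' ≤ 1 := rpow_le_one hx0.le hx1 (by linarith)
      rw [le_div_iff₀ hd]
      nlinarith [rpow_nonneg (mul_nonneg hr hx0.le) β, rpow_nonneg hx0.le β',
        mul_nonneg (sub_nonneg.2 h1) (sub_nonneg.2 h2)]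
    calc (1/4 : ℝ) * m = ∫ x in Ioc (0:ℝ) m, (1/4 : ℝ) := by
          rw [setIntegral_const, measureReal_def, Real.volume_Ioc, ENNReal.toReal_ofReal (by linarith), smul_eq_mul]
          ring
      _ ≤ _ := this
  have step2 : ∫ x in Ioc (0:ℝ) m, f x ≤ ∫ x in Ioi (0:ℝ), f x := by
    apply setIntegral_mono_set hint
    · filter_upwards [ae_restrict_mem measurableSet_Ioi] with x hx
      exact le_of_lt (by
        have hd := aux_denom_pos (β := β) (β' := β') hr (le_of_lt hx)
        positivity)
    · exact HasSubset.Subset.eventuallyLE Ioc_subset_Ioi_self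
  linarith
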